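/- Let I be a proper ideal of B_n, let (f_1,...,f_s) be a Z-separating tuple of Boolean polynomials in I with LT_σ(f_i) = z_i, write f_i = z_i + h_i, and let h̃_i be the normal remainder of h_i upon division by (f_1,...,f_s) (together with the field relations) with respect to σ. Then the tuple (z_1 − h̃_1, ..., z_s − h̃_s) consists of elements of I, and no term in the support of any z_i − h̃_i is divisible by z_j for j ≠ i; i.e., it is a coherently Z-separating tuple in I. -/
import Mathlib


open MvPolynomial

/-- A term ordering on the monomials (exponent tuples) of `K[x_1,…,x_n]`:
a linear order compatible with addition of exponents, with `1` (exponent `0`) least. -/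
structure TermOrder (n : ℕ) where
  le : (Fin n →₀ ℕ) → (Fin n →₀ ℕ) → Prop
  total : ∀ a b, le a b ∨ le b a
  antisymm : ∀ a b, le a b → le b a → a = b
  trans : ∀ a b c, le a b → le b c → le a c
  add_le_add : ∀ a b c, le a b → le (a + c) (b + c)
  zero_le : ∀ a, le 0 a

/-- `d` is the exponent of the leading term of `f` with respect to `σ`. -/
def IsLeadingTerm {n : ℕ} {K : Type*} [CommSemiring K] (σ : TermOrder n)
    (f : MvPolynomial (Fin n) K) (d : Fin n →₀ ℕ) : Prop :=
  d ∈ f.support ∧ ∀ d' ∈ f.support, σ.le d' d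

/-- The field ideal `⟨X_1²−X_1, …, X_n²−X_n⟩` of `F_2[X_1,…,X_n]`. -/
noncomputable def fieldIdeal (n : ℕ) : Ideal (MvPolynomial (Fin n) (ZMod 2)) :=
  Ideal.span (Set.range fun i => (X i : MvPolynomial (Fin n) (ZMod 2)) ^ 2 - X i)

/-- A polynomial is square-free (as a sum of terms) if all exponents are `≤ 1`. -/
def IsSquarefreePoly {n : ℕ} (F : MvPolynomial (Fin n) (ZMod 2)) : Prop :=
  ∀ d ∈ F.support, ∀ i, d i ≤ 1

/-- If `(f_1,…,f_s)` is a `Z`-separating tuple of Boolean polynomials in a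
proper ideal `I` (represented by `F_i = X (Z i) + H i ∈ I'` with `LT_σ(F_i) = Z_i`), and
`h̃_i` is the normal remainder of `h_i` on division by `(f_1,…,f_s)` and the field
relations (so `h̃_i` is square-free, fully reduced against the leading terms `z_j`, and
`h_i − h̃_i` lies in `⟨f_1,…,f_s⟩ + I_n`), then `(z_1 − h̃_1, …, z_s − h̃_s)` is a
coherently `Z`-separating tuple in `I`: its entries lie in `I`, and no term of
`z_i − h̃_i` is divisible by `z_j` for `j ≠ i`. -/
theorem coherently_Zsep_from_normal_remainder {n s : ℕ} (σ : TermOrder n)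
    (I' : Ideal (MvPolynomial (Fin n) (ZMod 2))) (hI' : I' ≠ ⊤)
    (hIn : fieldIdeal n ≤ I')
    (Z : Fin s → Fin n) (hZ : Function.Injective Z)
    (F : Fin s → MvPolynomial (Fin n) (ZMod 2)) (hFI : ∀ i, F i ∈ I')
    (hLT : ∀ i, IsLeadingTerm σ (F i) (Finsupp.single (Z i) 1))
    (H : Fin s → MvPolynomial (Fin n) (ZMod 2))
    (hH : ∀ i, F i = X (Z i) + H i)
    (Ht : Fin s → MvPolynomial (Fin n) (ZMod 2))
    (hNR1 : ∀ i, IsSquarefreePoly (Ht i))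
    (hNR2 : ∀ i, ∀ d ∈ (Ht i).support, ∀ j, d (Z j) = 0)
    (hNR3 : ∀ i, H i - Ht i ∈ Ideal.span (Set.range F) ⊔ fieldIdeal n) :
    ∀ i, ((X (Z i) : MvPolynomial (Fin n) (ZMod 2)) - Ht i ∈ I') ∧
      ∀ j, j ≠ i →
        ∀ d ∈ ((X (Z i) : MvPolynomial (Fin n) (ZMod 2)) - Ht i).support, d (Z j) = 0 := by
  intro i
  constructor
  · have h1 : Ideal.span (Set.range F) ⊔ fieldIdeal n ≤ I' := by
      apply sup_le _ hIn
      rw [Ideal.span_le]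
      rintro _ ⟨j, rfl⟩
      exact hFI j
    have h2 := h1 (hNR3 i)
    have h2H : H i + H i = 0 := CharTwo.add_self_eq_zero _
    have heq : (X (Z i) : MvPolynomial (Fin n) (ZMod 2)) - Ht i = F i + (H i - Ht i) := by
      rw [hH i]
      linear_combination -h2H
    rw [heq]
    exact I'.add_mem (hFI i) h2
  · intro j hj d hd
    have hsub := MvPolynomial.support_sub (Fin n)
      (X (Z i) : MvPolynomial (Fin n) (ZMod 2)) (Ht i) hd
    rw [Finset.mem_union, MvPolynomial.support_X] at hsub
    rcases hsub with h | h
    · rw [Finset.mem_singleton] at h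
      subst h
      rw [Finsupp.single_apply, if_neg]
      exact fun hc => hj (hZ hc).symm
    · exact hNR2 i d h j
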